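/- arXiv:1902.03903 — 2 statements merged into one kernel-verified Lean document; each statement's English description precedes it below -/
import Mathlib

section
/- Let N ≥ 3 be odd, β ∈ ℝ, m = (N−1)/2, and ω_k = √(1 + 4 sin²(kπ/N)). Then the N functions a_1, …, a_m, b_1, …, b_m, a_N on ℝ^{2N} pairwise Poisson-commute, and each of them Poisson-commutes with the truncated normal form H̄ = H₂ + H̄₄, where H₂ = Σ_{k=1}^N (ω_k/2)(Q_k² + P_k²) and H̄₄ = (β/(2N)) [ (3/4) Σ_{k=1}^m (3a_k² − b_k²)/ω_k² + (3/2) a_N²/ω_N² + 6 (a_N/ω_N) Σ_{k=1}^m a_k/ω_k + 6 Σ_{1≤k<l≤m} a_k a_l/(ω_k ω_l) ]. Hence the truncated fourth-order normal form of the periodic KG lattice with N odd is Liouville integrable with quadratic first integrals. -/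
noncomputable section

open Finset

/-- The Poisson bracket on `ℝ^{2N}` with coordinates `(Q, P)`:
`{f,g} = Σ_k (∂f/∂Q_k ∂g/∂P_k − ∂f/∂P_k ∂g/∂Q_k)`. -/
def pb {N : ℕ} (f g : ((Fin N → ℝ) × (Fin N → ℝ)) → ℝ)
    (x : (Fin N → ℝ) × (Fin N → ℝ)) : ℝ :=
  ∑ k : Fin N,
    (fderiv ℝ f x (Pi.single k (1 : ℝ), 0) * fderiv ℝ g x (0, Pi.single k (1 : ℝ))
      - fderiv ℝ f x (0, Pi.single k (1 : ℝ)) * fderiv ℝ g x (Pi.single k (1 : ℝ), 0))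

/-- The coordinate with (1-based) label `j` is the component `(j−1) mod N` of `Fin N`. -/
def co (N : ℕ) (hN : 0 < N) (j : ℕ) : Fin N := ⟨(j - 1) % N, Nat.mod_lt _ hN⟩

/-- Hopf variable `a_k = ½(Q_k² + P_k² + Q_{N−k}² + P_{N−k}²)`. -/
def aH (N : ℕ) (hN : 0 < N) (k : ℕ) (x : (Fin N → ℝ) × (Fin N → ℝ)) : ℝ :=
  (x.1 (co N hN k) ^ 2 + x.2 (co N hN k) ^ 2
    + x.1 (co N hN (N - k)) ^ 2 + x.2 (co N hN (N - k)) ^ 2) / 2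

/-- Hopf variable `b_k = Q_k P_{N−k} − Q_{N−k} P_k`. -/
def bH (N : ℕ) (hN : 0 < N) (k : ℕ) (x : (Fin N → ℝ) × (Fin N → ℝ)) : ℝ :=
  x.1 (co N hN k) * x.2 (co N hN (N - k)) - x.1 (co N hN (N - k)) * x.2 (co N hN k)

/-- `a_N = ½(Q_N² + P_N²)`. -/
def aNf (N : ℕ) (hN : 0 < N) (x : (Fin N → ℝ) × (Fin N → ℝ)) : ℝ :=
  (x.1 (co N hN N) ^ 2 + x.2 (co N hN N) ^ 2) / 2

/-- The normal-mode frequencies `ω_k = √(1 + 4 sin²(kπ/N))` (note `ω_N = 1`). -/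
def omg (N k : ℕ) : ℝ := Real.sqrt (1 + 4 * Real.sin (k * Real.pi / N) ^ 2)

/-- The quadratic part `H₂ = Σ_{k=1}^N (ω_k/2)(Q_k² + P_k²)`. -/
def H2KG (N : ℕ) (hN : 0 < N) (x : (Fin N → ℝ) × (Fin N → ℝ)) : ℝ :=
  ∑ k ∈ Finset.Icc 1 N, omg N k / 2 * (x.1 (co N hN k) ^ 2 + x.2 (co N hN k) ^ 2)

/-- The fourth order part `H̄₄` of the normal form of the periodic KG lattice, `N` odd:
`H̄₄ = (β/(2N)) [ (3/4) Σ_{k=1}^{(N−1)/2} (3a_k² − b_k²)/ω_k² + (3/2) a_N²/ω_N²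
+ 6 (a_N/ω_N) Σ_{k=1}^{(N−1)/2} a_k/ω_k + 6 Σ_{1≤k<l≤(N−1)/2} a_k a_l/(ω_k ω_l) ]`. -/
def H4odd (N : ℕ) (hN : 0 < N) (β : ℝ) (x : (Fin N → ℝ) × (Fin N → ℝ)) : ℝ :=
  β / (2 * N) *
    ((3 / 4) * ∑ k ∈ Finset.Icc 1 ((N - 1) / 2),
        (3 * aH N hN k x ^ 2 - bH N hN k x ^ 2) / omg N k ^ 2
      + (3 / 2) * aNf N hN x ^ 2 / omg N N ^ 2
      + 6 * (aNf N hN x / omg N N) * ∑ k ∈ Finset.Icc 1 ((N - 1) / 2), aH N hN k x / omg N k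
      + 6 * ∑ k ∈ Finset.Icc 1 ((N - 1) / 2), ∑ l ∈ Finset.Icc (k + 1) ((N - 1) / 2),
          aH N hN k x * aH N hN l x / (omg N k * omg N l))


namespace KGaux

abbrev E (N : ℕ) := (Fin N → ℝ) × (Fin N → ℝ)

variable {N : ℕ}

def ind (i r : Fin N) : ℝ := if i = r then 1 else 0

def Qc (i : Fin N) : E N →L[ℝ] ℝ :=
  (ContinuousLinearMap.proj i).comp (ContinuousLinearMap.fst ℝ (Fin N → ℝ) (Fin N → ℝ))
def Pc (i : Fin N) : E N →L[ℝ] ℝ :=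
  (ContinuousLinearMap.proj i).comp (ContinuousLinearMap.snd ℝ (Fin N → ℝ) (Fin N → ℝ))

@[simp] lemma Qc_apply (i : Fin N) (v : E N) : Qc i v = v.1 i := rfl
@[simp] lemma Pc_apply (i : Fin N) (v : E N) : Pc i v = v.2 i := rfl

lemma hasQ (i : Fin N) (x : E N) : HasFDerivAt (fun y : E N => y.1 i) (Qc i) x :=
  (Qc i).hasFDerivAt
lemma hasP (i : Fin N) (x : E N) : HasFDerivAt (fun y : E N => y.2 i) (Pc i) x :=
  (Pc i).hasFDerivAt

/-- pair radial function: `aH` in abstract-index form. -/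
def pairA (i j : Fin N) (y : E N) : ℝ := (y.1 i ^ 2 + y.2 i ^ 2 + y.1 j ^ 2 + y.2 j ^ 2) / 2
/-- angular-momentum function: `bH` in abstract-index form. -/
def pairB (i j : Fin N) (y : E N) : ℝ := y.1 i * y.2 j - y.1 j * y.2 i
/-- single radial: `aNf` in abstract-index form. -/
def radH (u : Fin N) (y : E N) : ℝ := (y.1 u ^ 2 + y.2 u ^ 2) / 2
/-- the quadratic piece of `H2KG`. -/
def rad2 (u : Fin N) (y : E N) : ℝ := y.1 u ^ 2 + y.2 u ^ 2

@[fun_prop] lemma diff_pairA (i j : Fin N) : Differentiable ℝ (pairA i j) := by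
  unfold pairA; fun_prop
@[fun_prop] lemma diff_pairB (i j : Fin N) : Differentiable ℝ (pairB i j) := by
  unfold pairB; fun_prop
@[fun_prop] lemma diff_radH (u : Fin N) : Differentiable ℝ (radH u) := by
  unfold radH; fun_prop
@[fun_prop] lemma diff_rad2 (u : Fin N) : Differentiable ℝ (rad2 u) := by
  unfold rad2; fun_prop

lemma sum_ind_mul (a b : Fin N) : ∑ r : Fin N, ind a r * ind b r = if a = b then (1:ℝ) else 0 := by
  have h : ∀ r : Fin N, ind a r * ind b r = if a = r then (if a = b then (1:ℝ) else 0) else 0 := by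
    intro r
    by_cases h1 : a = r
    · subst h1
      by_cases h2 : a = b
      · subst h2; simp [ind]
      · simp [ind, h2, Ne.symm h2]
    · simp [ind, h1]
  simp only [h]
  rw [Finset.sum_ite_eq]
  simp

lemma key (i j i' j' : Fin N) (α β γ δ α' β' γ' δ' : ℝ) :
    ∑ r : Fin N, ((α * ind i r + β * ind j r) * (γ' * ind i' r + δ' * ind j' r)
      - (γ * ind i r + δ * ind j r) * (α' * ind i' r + β' * ind j' r))
    = (if i = i' then α * γ' - γ * α' else 0) + (if i = j' then α * δ' - γ * β' else 0)
      + (if j = i' then β * γ' - δ * α' else 0) + (if j = j' then β * δ' - δ * β' else 0) := by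
  have h : ∀ r : Fin N, ((α * ind i r + β * ind j r) * (γ' * ind i' r + δ' * ind j' r)
      - (γ * ind i r + δ * ind j r) * (α' * ind i' r + β' * ind j' r))
      = (α * γ' - γ * α') * (ind i r * ind i' r) + (α * δ' - γ * β') * (ind i r * ind j' r)
        + ((β * γ' - δ * α') * (ind j r * ind i' r) + (β * δ' - δ * β') * (ind j r * ind j' r)) :=
    fun r => by ring
  rw [Finset.sum_congr rfl fun r _ => h r, Finset.sum_add_distrib, Finset.sum_add_distrib,
    Finset.sum_add_distrib, ← Finset.mul_sum, ← Finset.mul_sum, ← Finset.mul_sum,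
    ← Finset.mul_sum, sum_ind_mul, sum_ind_mul, sum_ind_mul, sum_ind_mul]
  split_ifs <;> ring

section evals
variable (x : E N) (r : Fin N)

lemma fdq_pairA (i j : Fin N) :
    fderiv ℝ (pairA i j) x (Pi.single r 1, 0) = x.1 i * ind i r + x.1 j * ind j r := by
  have h := ((((((hasQ i x).mul (hasQ i x)).add ((hasP i x).mul (hasP i x))).add
      ((hasQ j x).mul (hasQ j x))).add ((hasP j x).mul (hasP j x))).const_mul (1/2 : ℝ))
  have e : pairA i j
      = fun y : E N => (1/2 : ℝ) * (y.1 i * y.1 i + y.2 i * y.2 i + y.1 j * y.1 j + y.2 j * y.2 j) := by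
    funext y; simp only [pairA]; ring
  erw [e, h.fderiv]
  simp [Pi.single_apply, ind]
  split_ifs <;> ring

lemma fdp_pairA (i j : Fin N) :
    fderiv ℝ (pairA i j) x (0, Pi.single r 1) = x.2 i * ind i r + x.2 j * ind j r := by
  have h := ((((((hasQ i x).mul (hasQ i x)).add ((hasP i x).mul (hasP i x))).add
      ((hasQ j x).mul (hasQ j x))).add ((hasP j x).mul (hasP j x))).const_mul (1/2 : ℝ))
  have e : pairA i j
      = fun y : E N => (1/2 : ℝ) * (y.1 i * y.1 i + y.2 i * y.2 i + y.1 j * y.1 j + y.2 j * y.2 j) := by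
    funext y; simp only [pairA]; ring
  erw [e, h.fderiv]
  simp [Pi.single_apply, ind]
  split_ifs <;> ring

lemma fdq_pairB (i j : Fin N) :
    fderiv ℝ (pairB i j) x (Pi.single r 1, 0) = x.2 j * ind i r + (-x.2 i) * ind j r := by
  have h := ((hasQ i x).mul (hasP j x)).sub ((hasQ j x).mul (hasP i x))
  rw [show pairB i j = fun y : E N => y.1 i * y.2 j - y.1 j * y.2 i from rfl]
  erw [h.fderiv]
  simp [Pi.single_apply, ind]
  split_ifs <;> ring

lemma fdp_pairB (i j : Fin N) :
    fderiv ℝ (pairB i j) x (0, Pi.single r 1) = (-x.1 j) * ind i r + x.1 i * ind j r := by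
  have h := ((hasQ i x).mul (hasP j x)).sub ((hasQ j x).mul (hasP i x))
  rw [show pairB i j = fun y : E N => y.1 i * y.2 j - y.1 j * y.2 i from rfl]
  erw [h.fderiv]
  simp [Pi.single_apply, ind]
  split_ifs <;> ring

lemma fdq_radH (u : Fin N) :
    fderiv ℝ (radH u) x (Pi.single r 1, 0) = x.1 u * ind u r + 0 * ind u r := by
  have h := ((((hasQ u x).mul (hasQ u x)).add ((hasP u x).mul (hasP u x))).const_mul (1/2 : ℝ))
  have e : radH u = fun y : E N => (1/2 : ℝ) * (y.1 u * y.1 u + y.2 u * y.2 u) := by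
    funext y; simp only [radH]; ring
  erw [e, h.fderiv]
  simp [Pi.single_apply, ind]
  split_ifs <;> ring

lemma fdp_radH (u : Fin N) :
    fderiv ℝ (radH u) x (0, Pi.single r 1) = x.2 u * ind u r + 0 * ind u r := by
  have h := ((((hasQ u x).mul (hasQ u x)).add ((hasP u x).mul (hasP u x))).const_mul (1/2 : ℝ))
  have e : radH u = fun y : E N => (1/2 : ℝ) * (y.1 u * y.1 u + y.2 u * y.2 u) := by
    funext y; simp only [radH]; ring
  erw [e, h.fderiv]
  simp [Pi.single_apply, ind]
  split_ifs <;> ring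

lemma fdq_rad2 (u : Fin N) :
    fderiv ℝ (rad2 u) x (Pi.single r 1, 0) = (2 * x.1 u) * ind u r + 0 * ind u r := by
  have h := (((hasQ u x).mul (hasQ u x)).add ((hasP u x).mul (hasP u x)))
  have e : rad2 u = fun y : E N => y.1 u * y.1 u + y.2 u * y.2 u := by
    funext y; simp only [rad2]; ring
  erw [e, h.fderiv]
  simp [Pi.single_apply, ind]
  split_ifs <;> ring

lemma fdp_rad2 (u : Fin N) :
    fderiv ℝ (rad2 u) x (0, Pi.single r 1) = (2 * x.2 u) * ind u r + 0 * ind u r := by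
  have h := (((hasQ u x).mul (hasQ u x)).add ((hasP u x).mul (hasP u x)))
  have e : rad2 u = fun y : E N => y.1 u * y.1 u + y.2 u * y.2 u := by
    funext y; simp only [rad2]; ring
  erw [e, h.fderiv]
  simp [Pi.single_apply, ind]
  split_ifs <;> ring

end evals

end KGaux
namespace KGaux
variable {N : ℕ} {f g h : E N → ℝ} {x : E N}

lemma pb_self (f : E N → ℝ) (x : E N) : pb f f x = 0 := by
  simp only [pb]
  exact Finset.sum_eq_zero fun r _ => by ring

lemma pb_swap (f g : E N → ℝ) (x : E N) : pb f g x = - pb g f x := by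
  simp only [pb, ← Finset.sum_neg_distrib]
  exact Finset.sum_congr rfl fun r _ => by ring

lemma pb_add_right (hg : DifferentiableAt ℝ g x) (hh : DifferentiableAt ℝ h x) :
    pb f (fun y => g y + h y) x = pb f g x + pb f h x := by
  simp only [pb, fderiv_fun_add hg hh, ContinuousLinearMap.add_apply, ← Finset.sum_add_distrib]
  exact Finset.sum_congr rfl fun r _ => by ring

lemma pb_sub_right (hg : DifferentiableAt ℝ g x) (hh : DifferentiableAt ℝ h x) :
    pb f (fun y => g y - h y) x = pb f g x - pb f h x := by
  simp only [pb, fderiv_fun_sub hg hh, ContinuousLinearMap.sub_apply, ← Finset.sum_sub_distrib]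
  exact Finset.sum_congr rfl fun r _ => by ring

lemma pb_mul_right (hg : DifferentiableAt ℝ g x) (hh : DifferentiableAt ℝ h x) :
    pb f (fun y => g y * h y) x = g x * pb f h x + h x * pb f g x := by
  simp only [pb, fderiv_fun_mul hg hh, ContinuousLinearMap.add_apply,
    ContinuousLinearMap.smul_apply, smul_eq_mul, Finset.mul_sum, ← Finset.sum_add_distrib]
  exact Finset.sum_congr rfl fun r _ => by ring

lemma pb_const_mul_right (c : ℝ) (hg : DifferentiableAt ℝ g x) :
    pb f (fun y => c * g y) x = c * pb f g x := by
  simp only [pb, fderiv_const_mul hg c, ContinuousLinearMap.smul_apply, smul_eq_mul,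
    Finset.mul_sum]
  exact Finset.sum_congr rfl fun r _ => by ring

lemma pb_mul_const_right (c : ℝ) (hg : DifferentiableAt ℝ g x) :
    pb f (fun y => g y * c) x = pb f g x * c := by
  simp only [pb, fderiv_mul_const hg c, ContinuousLinearMap.smul_apply, smul_eq_mul,
    Finset.sum_mul]
  exact Finset.sum_congr rfl fun r _ => by ring

lemma pb_div_const_right (c : ℝ) (hg : DifferentiableAt ℝ g x) :
    pb f (fun y => g y / c) x = pb f g x / c := by
  simp only [div_eq_mul_inv]
  exact pb_mul_const_right c⁻¹ hg

lemma pb_sq_right (hg : DifferentiableAt ℝ g x) :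
    pb f (fun y => g y ^ 2) x = 2 * g x * pb f g x := by
  have e : (fun y => g y ^ 2) = fun y => g y * g y := by funext y; ring
  rw [e, pb_mul_right hg hg]; ring

lemma pb_sum_right {ι : Type*} (s : Finset ι) (g : ι → E N → ℝ)
    (hg : ∀ t ∈ s, DifferentiableAt ℝ (g t) x) :
    pb f (fun y => ∑ t ∈ s, g t y) x = ∑ t ∈ s, pb f (g t) x := by
  simp only [pb, fderiv_fun_sum hg, ContinuousLinearMap.sum_apply, Finset.mul_sum,
    ← Finset.sum_sub_distrib]
  exact Finset.sum_comm

end KGaux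
namespace KGaux
variable {N : ℕ}

section basebrackets
variable (x : E N)

lemma pb_pairA_pairA (i j i' j' : Fin N) : pb (pairA i j) (pairA i' j') x = 0 := by
  simp only [pb, fdq_pairA, fdp_pairA]
  rw [key]
  split_ifs <;> subst_vars <;> ring

lemma pb_pairA_radH (i j u : Fin N) : pb (pairA i j) (radH u) x = 0 := by
  simp only [pb, fdq_pairA, fdp_pairA, fdq_radH, fdp_radH]
  rw [key]
  split_ifs <;> subst_vars <;> ring

lemma pb_pairA_rad2 (i j u : Fin N) : pb (pairA i j) (rad2 u) x = 0 := by
  simp only [pb, fdq_pairA, fdp_pairA, fdq_rad2, fdp_rad2]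
  rw [key]
  split_ifs <;> subst_vars <;> ring

lemma pb_radH_radH (u v : Fin N) : pb (radH u) (radH v) x = 0 := by
  simp only [pb, fdq_radH, fdp_radH]
  rw [key]
  split_ifs <;> subst_vars <;> ring

lemma pb_radH_rad2 (u v : Fin N) : pb (radH u) (rad2 v) x = 0 := by
  simp only [pb, fdq_radH, fdp_radH, fdq_rad2, fdp_rad2]
  rw [key]
  split_ifs <;> subst_vars <;> ring

lemma pb_radH_pairA (u i j : Fin N) : pb (radH u) (pairA i j) x = 0 := by
  rw [pb_swap, pb_pairA_radH]; ring

lemma pb_pairA_pairB_self (i j : Fin N) (hij : i ≠ j) : pb (pairA i j) (pairB i j) x = 0 := by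
  simp only [pb, fdq_pairA, fdp_pairA, fdq_pairB, fdp_pairB]
  rw [key]
  rw [if_pos rfl, if_pos rfl, if_neg hij, if_neg (Ne.symm hij)]
  ring

lemma pb_pairA_pairB_disj (i j i' j' : Fin N) (h1 : i ≠ i') (h2 : i ≠ j') (h3 : j ≠ i')
    (h4 : j ≠ j') : pb (pairA i j) (pairB i' j') x = 0 := by
  simp only [pb, fdq_pairA, fdp_pairA, fdq_pairB, fdp_pairB]
  rw [key]
  simp [h1, h2, h3, h4]

lemma pb_pairB_pairB_disj (i j i' j' : Fin N) (h1 : i ≠ i') (h2 : i ≠ j') (h3 : j ≠ i')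
    (h4 : j ≠ j') : pb (pairB i j) (pairB i' j') x = 0 := by
  simp only [pb, fdq_pairB, fdp_pairB]
  rw [key]
  simp [h1, h2, h3, h4]

lemma pb_pairB_pairA_disj (i j i' j' : Fin N) (h1 : i ≠ i') (h2 : i ≠ j') (h3 : j ≠ i')
    (h4 : j ≠ j') : pb (pairB i j) (pairA i' j') x = 0 := by
  simp only [pb, fdq_pairB, fdp_pairB, fdq_pairA, fdp_pairA]
  rw [key]
  simp [h1, h2, h3, h4]

lemma pb_pairB_pairA_self (i j : Fin N) (hij : i ≠ j) : pb (pairB i j) (pairA i j) x = 0 := by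
  rw [pb_swap, pb_pairA_pairB_self x i j hij]; ring

lemma pb_pairB_radH_disj (i j u : Fin N) (h1 : i ≠ u) (h2 : j ≠ u) :
    pb (pairB i j) (radH u) x = 0 := by
  simp only [pb, fdq_pairB, fdp_pairB, fdq_radH, fdp_radH]
  rw [key]
  simp [h1, h2]

lemma pb_pairB_rad2 (i j u : Fin N) (hij : i ≠ j) :
    pb (pairB i j) (rad2 u) x
      = (if i = u then 2 * (x.1 j * x.1 u + x.2 j * x.2 u) else 0)
        - (if j = u then 2 * (x.1 i * x.1 u + x.2 i * x.2 u) else 0) := by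
  simp only [pb, fdq_pairB, fdp_pairB, fdq_rad2, fdp_rad2]
  rw [key]
  by_cases h1 : i = u
  · by_cases h2 : j = u
    · exact absurd (h1.trans h2.symm) hij
    · subst h1; simp [h2]; ring
  · by_cases h2 : j = u
    · subst h2; simp [h1]; ring
    · simp [h1, h2]

end basebrackets
end KGaux
namespace KGaux
variable {N : ℕ} (hN0 : 0 < N)

lemma co_eq_iff (a b : ℕ) (ha1 : 1 ≤ a) (haN : a ≤ N) (hb1 : 1 ≤ b) (hbN : b ≤ N) :
    co N hN0 a = co N hN0 b ↔ a = b := by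
  unfold co
  rw [Fin.mk.injEq, Nat.mod_eq_of_lt (by omega), Nat.mod_eq_of_lt (by omega)]
  omega

lemma omg_symm (k : ℕ) (h1 : 1 ≤ k) (h2 : k ≤ N) : omg N k = omg N (N - k) := by
  unfold omg
  have hN' : (N:ℝ) ≠ 0 := Nat.cast_ne_zero.mpr (by omega)
  have e : ((N - k : ℕ) : ℝ) * Real.pi / N = Real.pi - k * Real.pi / N := by
    rw [Nat.cast_sub h2]; field_simp
  rw [e, Real.sin_pi_sub]

@[fun_prop] lemma diff_aH (k : ℕ) : Differentiable ℝ (aH N hN0 k) := diff_pairA _ _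
@[fun_prop] lemma diff_bH (k : ℕ) : Differentiable ℝ (bH N hN0 k) := diff_pairB _ _
@[fun_prop] lemma diff_aNf : Differentiable ℝ (aNf N hN0) := diff_radH _

@[fun_prop] lemma diff_H2KG : Differentiable ℝ (H2KG N hN0) := by
  unfold H2KG; fun_prop

@[fun_prop] lemma diff_H4odd (β : ℝ) : Differentiable ℝ (H4odd N hN0 β) := by
  unfold H4odd; fun_prop

end KGaux
namespace KGaux
variable {N : ℕ} (hN0 : 0 < N)

lemma H2KG_eq : H2KG N hN0 = fun y => ∑ t ∈ Finset.Icc 1 N, omg N t / 2 * rad2 (co N hN0 t) y :=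
  rfl

lemma pb_aH_H2 (k : ℕ) (x : E N) : pb (aH N hN0 k) (H2KG N hN0) x = 0 := by
  have hdiff : ∀ t ∈ Finset.Icc 1 N,
      DifferentiableAt ℝ (fun y : E N => omg N t / 2 * rad2 (co N hN0 t) y) x :=
    fun t _ => by fun_prop
  rw [H2KG_eq, pb_sum_right _ _ hdiff]
  refine Finset.sum_eq_zero fun t _ => ?_
  rw [pb_const_mul_right _ (by fun_prop)]
  rw [show pb (aH N hN0 k) (rad2 (co N hN0 t)) x = 0 from
    pb_pairA_rad2 x _ _ _, mul_zero]

lemma pb_aNf_H2 (x : E N) : pb (aNf N hN0) (H2KG N hN0) x = 0 := by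
  have hdiff : ∀ t ∈ Finset.Icc 1 N,
      DifferentiableAt ℝ (fun y : E N => omg N t / 2 * rad2 (co N hN0 t) y) x :=
    fun t _ => by fun_prop
  rw [H2KG_eq, pb_sum_right _ _ hdiff]
  refine Finset.sum_eq_zero fun t _ => ?_
  rw [pb_const_mul_right _ (by fun_prop)]
  rw [show pb (aNf N hN0) (rad2 (co N hN0 t)) x = 0 from
    pb_radH_rad2 x _ _, mul_zero]

lemma pb_bH_H2 (k : ℕ) (h1 : 1 ≤ k) (h2 : 2 * k < N) (x : E N) :
    pb (bH N hN0 k) (H2KG N hN0) x = 0 := by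
  have hkN : k ≤ N := by omega
  have hNk1 : 1 ≤ N - k := by omega
  have hNkN : N - k ≤ N := by omega
  have hij : co N hN0 k ≠ co N hN0 (N - k) := by
    rw [Ne, co_eq_iff hN0 _ _ h1 hkN hNk1 hNkN]; omega
  have hdiff : ∀ t ∈ Finset.Icc 1 N,
      DifferentiableAt ℝ (fun y : E N => omg N t / 2 * rad2 (co N hN0 t) y) x :=
    fun t _ => by fun_prop
  rw [H2KG_eq, pb_sum_right _ _ hdiff]
  have step : ∀ t ∈ Finset.Icc 1 N,
      pb (bH N hN0 k) (fun y => omg N t / 2 * rad2 (co N hN0 t) y) x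
      = (if k = t then omg N t / 2 *
            (2 * (x.1 (co N hN0 (N-k)) * x.1 (co N hN0 t) + x.2 (co N hN0 (N-k)) * x.2 (co N hN0 t))) else 0)
        - (if N - k = t then omg N t / 2 *
            (2 * (x.1 (co N hN0 k) * x.1 (co N hN0 t) + x.2 (co N hN0 k) * x.2 (co N hN0 t))) else 0) := by
    intro t ht
    obtain ⟨ht1, htN⟩ := Finset.mem_Icc.mp ht
    rw [pb_const_mul_right _ (by fun_prop)]
    rw [show pb (bH N hN0 k) (rad2 (co N hN0 t)) x = _ from pb_pairB_rad2 x _ _ _ hij]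
    simp only [co_eq_iff hN0 k t h1 hkN ht1 htN, co_eq_iff hN0 (N-k) t hNk1 hNkN ht1 htN]
    split_ifs <;> ring
  rw [Finset.sum_congr rfl step, Finset.sum_sub_distrib,
    Finset.sum_ite_eq, Finset.sum_ite_eq,
    if_pos (Finset.mem_Icc.mpr ⟨h1, hkN⟩), if_pos (Finset.mem_Icc.mpr ⟨hNk1, hNkN⟩),
    ← omg_symm k h1 hkN]
  ring

end KGaux
namespace KGaux
variable {N : ℕ} (hN0 : 0 < N)

lemma pb_H4 (β : ℝ) (f : E N → ℝ) (x : E N)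
    (ha : ∀ l, 1 ≤ l → l ≤ (N-1)/2 → pb f (aH N hN0 l) x = 0)
    (hb : ∀ l, 1 ≤ l → l ≤ (N-1)/2 → pb f (bH N hN0 l) x = 0)
    (haN : pb f (aNf N hN0) x = 0) :
    pb f (fun y => H4odd N hN0 β y) x = 0 := by
  simp (disch := intros; fun_prop) only [H4odd, pb_const_mul_right, pb_add_right,
    pb_sub_right, pb_mul_right, pb_div_const_right, pb_sq_right, pb_sum_right]
  have hA : ∀ l ∈ Finset.Icc 1 ((N-1)/2), pb f (aH N hN0 l) x = 0 := fun l hl => by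
    obtain ⟨u, v⟩ := Finset.mem_Icc.mp hl; exact ha l u v
  have hB : ∀ l ∈ Finset.Icc 1 ((N-1)/2), pb f (bH N hN0 l) x = 0 := fun l hl => by
    obtain ⟨u, v⟩ := Finset.mem_Icc.mp hl; exact hb l u v
  have s1 : ∑ l ∈ Finset.Icc 1 ((N-1)/2),
      (3 * (2 * aH N hN0 l x * pb f (aH N hN0 l) x) - 2 * bH N hN0 l x * pb f (bH N hN0 l) x) /
        omg N l ^ 2 = 0 :=
    Finset.sum_eq_zero fun l hl => by rw [hA l hl, hB l hl]; ring
  have s2 : ∑ l ∈ Finset.Icc 1 ((N-1)/2), pb f (aH N hN0 l) x / omg N l = 0 :=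
    Finset.sum_eq_zero fun l hl => by rw [hA l hl]; ring
  have s3 : ∑ k ∈ Finset.Icc 1 ((N-1)/2), ∑ l ∈ Finset.Icc (k+1) ((N-1)/2),
      (aH N hN0 k x * pb f (aH N hN0 l) x + aH N hN0 l x * pb f (aH N hN0 k) x) /
        (omg N k * omg N l) = 0 :=
    Finset.sum_eq_zero fun k hk => Finset.sum_eq_zero fun l hl => by
      obtain ⟨hk1, hk2⟩ := Finset.mem_Icc.mp hk
      obtain ⟨hl1, hl2⟩ := Finset.mem_Icc.mp hl
      rw [ha l (by omega) hl2, ha k hk1 hk2]; ring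
  rw [s1, s2, s3, haN]
  ring

end KGaux


/-- For `N ≥ 3` odd and `m = (N−1)/2`, the `N` quadratic functions
`a_1, …, a_m, b_1, …, b_m, a_N` pairwise Poisson-commute and each of them
Poisson-commutes with the truncated normal form `H̄ = H₂ + H̄₄`; hence the truncated
fourth-order normal form of the periodic KG lattice with `N` odd is Liouville
integrable with quadratic first integrals. -/
theorem KG_odd_normal_form_integrable (N : ℕ) (hN : 3 ≤ N) (hodd : Odd N)
    (hN0 : 0 < N) (β : ℝ) :
    (∀ k l, 1 ≤ k → k ≤ (N - 1) / 2 → 1 ≤ l → l ≤ (N - 1) / 2 →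
      (∀ x, pb (aH N hN0 k) (aH N hN0 l) x = 0) ∧
      (∀ x, pb (aH N hN0 k) (bH N hN0 l) x = 0) ∧
      (∀ x, pb (bH N hN0 k) (bH N hN0 l) x = 0)) ∧
    (∀ k, 1 ≤ k → k ≤ (N - 1) / 2 →
      (∀ x, pb (aH N hN0 k) (aNf N hN0) x = 0) ∧
      (∀ x, pb (bH N hN0 k) (aNf N hN0) x = 0)) ∧
    (∀ k, 1 ≤ k → k ≤ (N - 1) / 2 →
      (∀ x, pb (aH N hN0 k) (fun y => H2KG N hN0 y + H4odd N hN0 β y) x = 0) ∧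
      (∀ x, pb (bH N hN0 k) (fun y => H2KG N hN0 y + H4odd N hN0 β y) x = 0)) ∧
    (∀ x, pb (aNf N hN0) (fun y => H2KG N hN0 y + H4odd N hN0 β y) x = 0) := by
  obtain ⟨c, hc⟩ := hodd
  have AA : ∀ k l x, pb (aH N hN0 k) (aH N hN0 l) x = 0 := fun k l x =>
    KGaux.pb_pairA_pairA x _ _ _ _
  have AN : ∀ k x, pb (aH N hN0 k) (aNf N hN0) x = 0 := fun k x =>
    KGaux.pb_pairA_radH x _ _ _
  have AB : ∀ k l, 1 ≤ k → k ≤ (N - 1) / 2 → 1 ≤ l → l ≤ (N - 1) / 2 →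
      ∀ x, pb (aH N hN0 k) (bH N hN0 l) x = 0 := by
    intro k l hk1 hk2 hl1 hl2 x
    by_cases hkl : k = l
    · subst hkl
      have hij : co N hN0 k ≠ co N hN0 (N - k) := by
        rw [Ne, KGaux.co_eq_iff hN0 _ _ hk1 (by omega) (by omega) (by omega)]; omega
      exact KGaux.pb_pairA_pairB_self x _ _ hij
    · refine KGaux.pb_pairA_pairB_disj x _ _ _ _ ?_ ?_ ?_ ?_ <;>
        (rw [Ne, KGaux.co_eq_iff hN0 _ _ (by omega) (by omega) (by omega) (by omega)]; omega)
  have BB : ∀ k l, 1 ≤ k → k ≤ (N - 1) / 2 → 1 ≤ l → l ≤ (N - 1) / 2 →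
      ∀ x, pb (bH N hN0 k) (bH N hN0 l) x = 0 := by
    intro k l hk1 hk2 hl1 hl2 x
    by_cases hkl : k = l
    · rw [hkl]; exact KGaux.pb_self _ x
    · refine KGaux.pb_pairB_pairB_disj x _ _ _ _ ?_ ?_ ?_ ?_ <;>
        (rw [Ne, KGaux.co_eq_iff hN0 _ _ (by omega) (by omega) (by omega) (by omega)]; omega)
  have BN : ∀ k, 1 ≤ k → k ≤ (N - 1) / 2 → ∀ x, pb (bH N hN0 k) (aNf N hN0) x = 0 := by
    intro k hk1 hk2 x
    refine KGaux.pb_pairB_radH_disj x _ _ _ ?_ ?_ <;>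
      (rw [Ne, KGaux.co_eq_iff hN0 _ _ (by omega) (by omega) (by omega) (by omega)]; omega)
  have BA : ∀ k l, 1 ≤ k → k ≤ (N - 1) / 2 → 1 ≤ l → l ≤ (N - 1) / 2 →
      ∀ x, pb (bH N hN0 k) (aH N hN0 l) x = 0 := by
    intro k l hk1 hk2 hl1 hl2 x
    rw [KGaux.pb_swap, AB l k hl1 hl2 hk1 hk2 x]; ring
  have NB : ∀ l, 1 ≤ l → l ≤ (N - 1) / 2 → ∀ x, pb (aNf N hN0) (bH N hN0 l) x = 0 := by
    intro l hl1 hl2 x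
    rw [KGaux.pb_swap, BN l hl1 hl2 x]; ring
  have NA : ∀ l x, pb (aNf N hN0) (aH N hN0 l) x = 0 := fun l x =>
    KGaux.pb_radH_pairA x _ _ _
  refine ⟨fun k l hk1 hk2 hl1 hl2 => ⟨AA k l, AB k l hk1 hk2 hl1 hl2, BB k l hk1 hk2 hl1 hl2⟩,
    fun k hk1 hk2 => ⟨AN k, BN k hk1 hk2⟩, fun k hk1 hk2 => ⟨?_, ?_⟩, ?_⟩
  · intro x
    have d2 : DifferentiableAt ℝ (fun y => H2KG N hN0 y) x := by fun_prop
    have d4 : DifferentiableAt ℝ (fun y => H4odd N hN0 β y) x := by fun_prop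
    have e2 := KGaux.pb_aH_H2 hN0 k x
    have e4 := KGaux.pb_H4 hN0 β (aH N hN0 k) x (fun l h1 h2 => AA k l x)
      (fun l h1 h2 => AB k l hk1 hk2 h1 h2 x) (AN k x)
    rw [KGaux.pb_add_right d2 d4, e2, e4, add_zero]
  · intro x
    have d2 : DifferentiableAt ℝ (fun y => H2KG N hN0 y) x := by fun_prop
    have d4 : DifferentiableAt ℝ (fun y => H4odd N hN0 β y) x := by fun_prop
    have e2 := KGaux.pb_bH_H2 hN0 k hk1 (by omega) x
    have e4 := KGaux.pb_H4 hN0 β (bH N hN0 k) x (fun l h1 h2 => BA k l hk1 hk2 h1 h2 x)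
      (fun l h1 h2 => BB k l hk1 hk2 h1 h2 x) (BN k hk1 hk2 x)
    rw [KGaux.pb_add_right d2 d4, e2, e4, add_zero]
  · intro x
    have d2 : DifferentiableAt ℝ (fun y => H2KG N hN0 y) x := by fun_prop
    have d4 : DifferentiableAt ℝ (fun y => H4odd N hN0 β y) x := by fun_prop
    have e2 := KGaux.pb_aNf_H2 hN0 x
    have e4 := KGaux.pb_H4 hN0 β (aNf N hN0) x (fun l h1 h2 => NA l x)
      (fun l h1 h2 => NB l h1 h2 x) (KGaux.pb_self _ x)
    rw [KGaux.pb_add_right d2 d4, e2, e4, add_zero]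


end
end

section
/- Let N ≥ 3 be odd and m = (N−1)/2. Consider the N functions a_1, …, a_m, b_1, …, b_m, a_N on ℝ^{2N}, where a_k = ½(Q_k² + P_k² + Q_{N−k}² + P_{N−k}²), b_k = Q_k P_{N−k} − Q_{N−k} P_k, a_N = ½(Q_N² + P_N²). At every point x ∈ ℝ^{2N} such that a_k(x) > 0 and |b_k(x)| < a_k(x) for all 1 ≤ k ≤ m and a_N(x) > 0, the derivatives (gradients) of these N functions are linearly independent. -/
noncomputable section

/-- The family `a_1, …, a_m, b_1, …, b_m, a_N` (`m = (N−1)/2`, `N = 2m+1` odd),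
indexed by `Fin N`: index `i < m` gives `a_{i+1}`, index `m ≤ i < 2m` gives
`b_{i−m+1}`, index `i = N−1` gives `a_N`. -/
def emFam (N : ℕ) (hN : 0 < N) (i : Fin N) : ((Fin N → ℝ) × (Fin N → ℝ)) → ℝ :=
  if (i : ℕ) < (N - 1) / 2 then aH N hN ((i : ℕ) + 1)
  else if (i : ℕ) < N - 1 then bH N hN ((i : ℕ) - (N - 1) / 2 + 1)
  else aNf N hN

/-! ### Auxiliary material -/

abbrev EE (N : ℕ) := (Fin N → ℝ) × (Fin N → ℝ)

def Qc {N : ℕ} (j : Fin N) : EE N →L[ℝ] ℝ :=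
  (ContinuousLinearMap.proj j).comp (ContinuousLinearMap.fst ℝ _ _)
def Pc {N : ℕ} (j : Fin N) : EE N →L[ℝ] ℝ :=
  (ContinuousLinearMap.proj j).comp (ContinuousLinearMap.snd ℝ _ _)

lemma hQ {N : ℕ} (j : Fin N) (x : EE N) : HasFDerivAt (fun y : EE N => y.1 j) (Qc j) x :=
  (Qc j).hasFDerivAt
lemma hP {N : ℕ} (j : Fin N) (x : EE N) : HasFDerivAt (fun y : EE N => y.2 j) (Pc j) x :=
  (Pc j).hasFDerivAt

lemma fderiv_aH_apply {N : ℕ} (hN : 0 < N) (k : ℕ) (x w : EE N) :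
    fderiv ℝ (aH N hN k) x w
      = x.1 (co N hN k) * w.1 (co N hN k) + x.2 (co N hN k) * w.2 (co N hN k)
        + x.1 (co N hN (N-k)) * w.1 (co N hN (N-k))
        + x.2 (co N hN (N-k)) * w.2 (co N hN (N-k)) := by
  set α := co N hN k
  set β := co N hN (N-k)
  have h : HasFDerivAt (aH N hN k)
      ((2:ℝ)⁻¹ • ((x.1 α • Qc α + x.1 α • Qc α) + (x.2 α • Pc α + x.2 α • Pc α)
        + (x.1 β • Qc β + x.1 β • Qc β) + (x.2 β • Pc β + x.2 β • Pc β))) x := by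
    unfold aH
    simp only [pow_two, div_eq_mul_inv]
    exact (((((hQ α x).mul (hQ α x)).add ((hP α x).mul (hP α x))).add
      ((hQ β x).mul (hQ β x))).add ((hP β x).mul (hP β x))).mul_const _
  rw [h.fderiv]
  simp [Qc, Pc]
  ring

lemma fderiv_bH_apply {N : ℕ} (hN : 0 < N) (k : ℕ) (x w : EE N) :
    fderiv ℝ (bH N hN k) x w
      = w.1 (co N hN k) * x.2 (co N hN (N-k)) + x.1 (co N hN k) * w.2 (co N hN (N-k))
        - w.1 (co N hN (N-k)) * x.2 (co N hN k) - x.1 (co N hN (N-k)) * w.2 (co N hN k) := by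
  set α := co N hN k
  set β := co N hN (N-k)
  have h : HasFDerivAt (bH N hN k)
      ((x.1 α • Pc β + x.2 β • Qc α) - (x.1 β • Pc α + x.2 α • Qc β)) x :=
    ((hQ α x).mul (hP β x)).sub ((hQ β x).mul (hP α x))
  rw [h.fderiv]
  simp [Qc, Pc]
  ring

lemma fderiv_aNf_apply {N : ℕ} (hN : 0 < N) (x w : EE N) :
    fderiv ℝ (aNf N hN) x w
      = x.1 (co N hN N) * w.1 (co N hN N) + x.2 (co N hN N) * w.2 (co N hN N) := by
  set γ := co N hN N
  have h : HasFDerivAt (aNf N hN)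
      ((2:ℝ)⁻¹ • ((x.1 γ • Qc γ + x.1 γ • Qc γ) + (x.2 γ • Pc γ + x.2 γ • Pc γ))) x := by
    unfold aNf
    simp only [pow_two, div_eq_mul_inv]
    exact (((hQ γ x).mul (hQ γ x)).add ((hP γ x).mul (hP γ x))).mul_const _
  rw [h.fderiv]
  simp [Qc, Pc]
  ring

lemma co_val {N : ℕ} (hN : 0 < N) (t : ℕ) (ht : t ≤ N) :
    ((co N hN t : Fin N) : ℕ) = t - 1 := by
  simp only [co]
  exact Nat.mod_eq_of_lt (by omega)

lemma sum_two {ι : Type*} [Fintype ι] [DecidableEq ι] (f : ι → ℝ) (i1 i2 : ι)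
    (h12 : i1 ≠ i2) (h0 : ∀ j, j ≠ i1 → j ≠ i2 → f j = 0) :
    ∑ j, f j = f i1 + f i2 := by
  have hsub : ({i1, i2} : Finset ι) ⊆ Finset.univ := Finset.subset_univ _
  rw [← Finset.sum_subset hsub (fun j _ hj => by
    simp only [Finset.mem_insert, Finset.mem_singleton, not_or] at hj
    exact h0 j hj.1 hj.2)]
  exact Finset.sum_pair h12

/-- Vanishing of the derivative of a member of the family in a coordinate direction
avoiding both coordinates that the member depends on. -/
lemma emFam_single_zero {N : ℕ} (hN0 : 0 < N) (hN3 : 3 ≤ N) (x : EE N) (j s : Fin N)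
    (d : EE N) (hd : d = (Pi.single s 1, 0) ∨ d = (0, Pi.single s 1))
    (h1 : (j:ℕ) < (N-1)/2 → (s:ℕ) ≠ (j:ℕ) ∧ (s:ℕ) ≠ N - (j:ℕ) - 2)
    (h2 : (N-1)/2 ≤ (j:ℕ) → (j:ℕ) < N-1 →
      (s:ℕ) ≠ (j:ℕ) - (N-1)/2 ∧ (s:ℕ) ≠ N - ((j:ℕ) - (N-1)/2) - 2)
    (h3 : (j:ℕ) = N-1 → (s:ℕ) ≠ N-1) :
    fderiv ℝ (emFam N hN0 j) x d = 0 := by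
  have hjlt : (j:ℕ) < N := j.isLt
  simp only [emFam]
  split_ifs with hj1 hj2
  · -- aH ((j:ℕ)+1)
    obtain ⟨hs1, hs2⟩ := h1 hj1
    have hc1 : ((co N hN0 ((j:ℕ)+1) : Fin N) : ℕ) = (j:ℕ) := by
      rw [co_val hN0 _ (by omega)]; omega
    have hc2 : ((co N hN0 (N - ((j:ℕ)+1)) : Fin N) : ℕ) = N - (j:ℕ) - 2 := by
      rw [co_val hN0 _ (by omega)]; omega
    have n1 : co N hN0 ((j:ℕ)+1) ≠ s := Fin.ne_of_val_ne (by omega)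
    have n2 : co N hN0 (N - ((j:ℕ)+1)) ≠ s := Fin.ne_of_val_ne (by omega)
    rcases hd with rfl | rfl <;>
      simp [fderiv_aH_apply, Pi.single_eq_of_ne n1, Pi.single_eq_of_ne n2]
  · -- bH
    obtain ⟨hs1, hs2⟩ := h2 (by omega) hj2
    set k := (j:ℕ) - (N-1)/2 + 1 with hk
    have hc1 : ((co N hN0 k : Fin N) : ℕ) = (j:ℕ) - (N-1)/2 := by
      rw [co_val hN0 _ (by omega)]; omega
    have hc2 : ((co N hN0 (N - k) : Fin N) : ℕ) = N - ((j:ℕ) - (N-1)/2) - 2 := by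
      rw [co_val hN0 _ (by omega)]; omega
    have n1 : co N hN0 k ≠ s := Fin.ne_of_val_ne (by omega)
    have n2 : co N hN0 (N - k) ≠ s := Fin.ne_of_val_ne (by omega)
    rcases hd with rfl | rfl <;>
      simp [fderiv_bH_apply, Pi.single_eq_of_ne n1, Pi.single_eq_of_ne n2]
  · -- aNf
    have hs : (s:ℕ) ≠ N-1 := h3 (by omega)
    have hc : ((co N hN0 N : Fin N) : ℕ) = N - 1 := by
      rw [co_val hN0 _ le_rfl]
    have n1 : co N hN0 N ≠ s := Fin.ne_of_val_ne (by omega)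
    rcases hd with rfl | rfl <;>
      simp [fderiv_aNf_apply, Pi.single_eq_of_ne n1]

lemma solve2 (ca cb qα pα qβ pβ : ℝ)
    (ha : 0 < (qα^2 + pα^2 + qβ^2 + pβ^2)/2)
    (hb : |qα*pβ - qβ*pα| < (qα^2 + pα^2 + qβ^2 + pβ^2)/2)
    (e1 : ca*qα + cb*pβ = 0) (e2 : ca*qβ - cb*pα = 0)
    (e3 : ca*pα - cb*qβ = 0) (e4 : ca*pβ + cb*qα = 0) :
    ca = 0 ∧ cb = 0 := by
  set S := qα^2 + pα^2 + qβ^2 + pβ^2 with hS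
  set b := qα*pβ - qβ*pα with hbdef
  have hS0 : 0 < S := by linarith
  have hb1 : 2*b < S := by
    have := (abs_lt.1 hb).2; linarith
  have hb2 : -S < 2*b := by
    have := (abs_lt.1 hb).1; linarith
  have h1 : S*ca + 2*b*cb = 0 := by
    linear_combination qα*e1 + qβ*e2 + pα*e3 + pβ*e4
  have h2 : 2*b*ca + S*cb = 0 := by
    linear_combination pβ*e1 - pα*e2 - qβ*e3 + qα*e4
  have hpos : 0 < S^2 - (2*b)^2 := by nlinarith
  have hca : (S^2 - (2*b)^2) * ca = 0 := by linear_combination S*h1 - 2*b*h2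
  have hca0 : ca = 0 := by
    rcases mul_eq_zero.1 hca with h | h
    · linarith
    · exact h
  refine ⟨hca0, ?_⟩
  have : S * cb = 0 := by rw [hca0] at h2; linarith
  rcases mul_eq_zero.1 this with h | h
  · linarith
  · exact h

/-- For `N ≥ 3` odd, `m = (N−1)/2`, at every point of the regular
set `U_r = { x : a_k(x) > 0, |b_k(x)| < a_k(x) (1 ≤ k ≤ m), a_N(x) > 0 }` the
derivatives of the `N` functions `a_1, …, a_m, b_1, …, b_m, a_N` are linearly
independent. -/
theorem energy_momentum_regular (N : ℕ) (hN : 3 ≤ N) (hodd : Odd N) (hN0 : 0 < N)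
    (x : (Fin N → ℝ) × (Fin N → ℝ))
    (hreg : ∀ k, 1 ≤ k → k ≤ (N - 1) / 2 →
      0 < aH N hN0 k x ∧ |bH N hN0 k x| < aH N hN0 k x)
    (haN : 0 < aNf N hN0 x) :
    LinearIndependent ℝ (fun i : Fin N => fderiv ℝ (emFam N hN0 i) x) := by
  classical
  obtain ⟨m0, hm0⟩ := hodd
  have hmN : N = 2 * ((N-1)/2) + 1 := by omega
  have hm1 : 1 ≤ (N-1)/2 := by omega
  rw [Fintype.linearIndependent_iff]
  intro g hg
  have hg' : ∀ w : EE N, ∑ j, g j * fderiv ℝ (emFam N hN0 j) x w = 0 := by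
    intro w
    have h := congrArg (fun L : EE N →L[ℝ] ℝ => L w) hg
    simpa [ContinuousLinearMap.sum_apply, ContinuousLinearMap.smul_apply,
      smul_eq_mul] using h
  have key : ∀ i1 i2 : Fin N, (i1:ℕ) < (N-1)/2 → (i2:ℕ) = (N-1)/2 + (i1:ℕ) →
      g i1 = 0 ∧ g i2 = 0 := by
    intro i1 i2 hi1 hi2v
    obtain ⟨k, hkdef⟩ : ∃ k, k = (i1:ℕ) + 1 := ⟨_, rfl⟩
    obtain ⟨ha, hb⟩ := hreg k (by omega) (by omega)
    obtain ⟨α, hα⟩ : ∃ a, a = co N hN0 k := ⟨_, rfl⟩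
    obtain ⟨β, hβ⟩ : ∃ a, a = co N hN0 (N-k) := ⟨_, rfl⟩
    have hαv : (α:ℕ) = (i1:ℕ) := by rw [hα, co_val hN0 _ (by omega)]; omega
    have hβv : (β:ℕ) = N - k - 1 := by rw [hβ, co_val hN0 _ (by omega)]
    have hαβ : α ≠ β := Fin.ne_of_val_ne (by omega)
    have hβα : β ≠ α := Fin.ne_of_val_ne (by omega)
    have hi12 : i1 ≠ i2 := Fin.ne_of_val_ne (by omega)
    have vA : ∀ w : EE N, fderiv ℝ (aH N hN0 k) x w
        = x.1 α * w.1 α + x.2 α * w.2 α + x.1 β * w.1 β + x.2 β * w.2 β := by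
      intro w; rw [fderiv_aH_apply, ← hα, ← hβ]
    have vB : ∀ w : EE N, fderiv ℝ (bH N hN0 k) x w
        = w.1 α * x.2 β + x.1 α * w.2 β - w.1 β * x.2 α - x.1 β * w.2 α := by
      intro w; rw [fderiv_bH_apply, ← hα, ← hβ]
    have ha' : 0 < (x.1 α^2 + x.2 α^2 + x.1 β^2 + x.2 β^2)/2 := by
      rw [hα, hβ]; exact ha
    have hb' : |x.1 α * x.2 β - x.1 β * x.2 α|
        < (x.1 α^2 + x.2 α^2 + x.1 β^2 + x.2 β^2)/2 := by
      rw [hα, hβ]; exact hb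
    clear hα hβ ha hb
    have hEi1 : emFam N hN0 i1 = aH N hN0 k := by
      simp only [emFam]; rw [if_pos hi1, hkdef]
    have hEi2 : emFam N hN0 i2 = bH N hN0 k := by
      have c1 : ¬((i2:ℕ) < (N-1)/2) := by omega
      have c2 : (i2:ℕ) < N - 1 := by omega
      have c3 : (i2:ℕ) - (N-1)/2 + 1 = k := by omega
      simp only [emFam]
      rw [if_neg c1, if_pos c2, c3]
    have keysum : ∀ d : EE N,
        (∀ j : Fin N, j ≠ i1 → j ≠ i2 → fderiv ℝ (emFam N hN0 j) x d = 0) →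
        g i1 * fderiv ℝ (aH N hN0 k) x d + g i2 * fderiv ℝ (bH N hN0 k) x d = 0 := by
      intro d hv
      have h := hg' d
      rw [sum_two _ i1 i2 hi12 (fun j hj1 hj2 => by rw [hv j hj1 hj2, mul_zero])] at h
      rwa [hEi1, hEi2] at h
    have hvan : ∀ s : Fin N, (s:ℕ) = (i1:ℕ) ∨ (s:ℕ) = N - k - 1 →
        ∀ d : EE N, (d = (Pi.single s 1, 0) ∨ d = (0, Pi.single s 1)) →
        ∀ j : Fin N, j ≠ i1 → j ≠ i2 → fderiv ℝ (emFam N hN0 j) x d = 0 := by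
      intro s hs d hd j hj1 hj2
      have hj1' : (j:ℕ) ≠ (i1:ℕ) := fun h => hj1 (Fin.ext h)
      have hj2' : (j:ℕ) ≠ (i2:ℕ) := fun h => hj2 (Fin.ext h)
      have hjlt : (j:ℕ) < N := j.isLt
      exact emFam_single_zero hN0 hN x j s d hd
        (fun hjm => by constructor <;> omega)
        (fun hjm hjn => by constructor <;> omega)
        (fun hjn => by omega)
    have e1 := keysum (Pi.single α 1, 0)
      (hvan α (Or.inl hαv) _ (Or.inl rfl))
    have e2 := keysum (Pi.single β 1, 0)
      (hvan β (Or.inr hβv) _ (Or.inl rfl))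
    have e3 := keysum ((0 : Fin N → ℝ), Pi.single α 1)
      (hvan α (Or.inl hαv) _ (Or.inr rfl))
    have e4 := keysum ((0 : Fin N → ℝ), Pi.single β 1)
      (hvan β (Or.inr hβv) _ (Or.inr rfl))
    rw [vA, vB] at e1
    rw [vA, vB] at e2
    rw [vA, vB] at e3
    rw [vA, vB] at e4
    simp only [Pi.single_eq_same, Pi.single_eq_of_ne hαβ, Pi.single_eq_of_ne hβα,
      Pi.zero_apply, mul_zero, zero_mul, mul_one, add_zero, zero_add, sub_zero,
      zero_sub, one_mul] at e1 e2 e3 e4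
    exact solve2 (g i1) (g i2) (x.1 α) (x.2 α) (x.1 β) (x.2 β) ha' hb'
      (by linear_combination e1) (by linear_combination e2)
      (by linear_combination e3) (by linear_combination e4)
  intro i
  have hilt : (i:ℕ) < N := i.isLt
  rcases lt_or_ge (i:ℕ) ((N-1)/2) with hi | hi
  · exact (key i ⟨(N-1)/2 + (i:ℕ), by omega⟩ hi rfl).1
  rcases lt_or_ge (i:ℕ) (N-1) with hi2 | hi2
  · exact (key ⟨(i:ℕ) - (N-1)/2, by omega⟩ i (by simp; omega) (by simp; omega)).2
  · -- i = N-1, aNf case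
    have hiv : (i:ℕ) = N - 1 := by omega
    obtain ⟨γ, hγ⟩ : ∃ a, a = co N hN0 N := ⟨_, rfl⟩
    have hγv : (γ:ℕ) = N - 1 := by rw [hγ, co_val hN0 _ le_rfl]
    have vN : ∀ w : EE N, fderiv ℝ (aNf N hN0) x w
        = x.1 γ * w.1 γ + x.2 γ * w.2 γ := by
      intro w; rw [fderiv_aNf_apply, ← hγ]
    have haN' : 0 < (x.1 γ^2 + x.2 γ^2)/2 := by rw [hγ]; exact haN
    clear hγ
    have hEi : emFam N hN0 i = aNf N hN0 := by
      simp only [emFam]; rw [if_neg (by omega), if_neg (by omega)]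
    have hvan : ∀ d : EE N, (d = (Pi.single γ 1, 0) ∨ d = (0, Pi.single γ 1)) →
        ∀ j : Fin N, j ≠ i → fderiv ℝ (emFam N hN0 j) x d = 0 := by
      intro d hd j hj
      have hj' : (j:ℕ) ≠ (i:ℕ) := fun h => hj (Fin.ext h)
      have hjlt : (j:ℕ) < N := j.isLt
      exact emFam_single_zero hN0 hN x j γ d hd
        (fun hjm => by constructor <;> omega)
        (fun hjm hjn => by constructor <;> omega)
        (fun hjn => by omega)
    have mk : ∀ d : EE N, (d = (Pi.single γ 1, 0) ∨ d = (0, Pi.single γ 1)) →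
        g i * fderiv ℝ (aNf N hN0) x d = 0 := by
      intro d hd
      have h := hg' d
      rw [Finset.sum_eq_single i
        (fun j _ hj => by rw [hvan d hd j hj, mul_zero])
        (fun h => absurd (Finset.mem_univ i) h)] at h
      rwa [hEi] at h
    have eq1 := mk (Pi.single γ 1, 0) (Or.inl rfl)
    have eq2 := mk ((0 : Fin N → ℝ), Pi.single γ 1) (Or.inr rfl)
    rw [vN] at eq1
    rw [vN] at eq2
    simp only [Pi.single_eq_same, Pi.zero_apply, mul_zero, mul_one, add_zero,
      zero_add] at eq1 eq2
    have h : g i * (x.1 γ^2 + x.2 γ^2) = 0 := by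
      linear_combination x.1 γ * eq1 + x.2 γ * eq2
    rcases mul_eq_zero.1 h with h' | h'
    · exact h'
    · linarith

end
end
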